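/- For (z,w), (z′,w′) ∈ ℂ², one has σ(z,w) = σ(z′,w′) if and only if (z′,w′) = e^{iθ}·(z,w) for some θ ∈ ℝ; that is, the fibres of σ are exactly the S¹-orbits in ℂ². -/

import Mathlib

/-- The action of `e^{iθ} ∈ S¹` on `ℂ²`, `e^{iθ}·(z,w) = (e^{iθ}z, e^{−iθ}w)`. -/
noncomputable def circleAct (θ : ℝ) (p : ℂ × ℂ) : ℂ × ℂ :=
  (Complex.exp (θ * Complex.I) * p.1, Complex.exp (-θ * Complex.I) * p.2)

/-- The invariant map `σ = (σ₁,σ₂,σ₃,σ₄) : ℂ² → ℝ⁴` with `σ₁ + iσ₂ = zw`,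
`σ₃ = ½(|z|² − |w|²)`, `σ₄ = ½(|z|² + |w|²)`. -/
noncomputable def sigmaMap4 (p : ℂ × ℂ) : Fin 4 → ℝ :=
  ![(p.1 * p.2).re, (p.1 * p.2).im,
    (‖p.1‖ ^ 2 - ‖p.2‖ ^ 2) / 2,
    (‖p.1‖ ^ 2 + ‖p.2‖ ^ 2) / 2]

private lemma exists_exp_of_abs_eq {a b : ℂ} (h : ‖a‖ = ‖b‖) :
    ∃ θ : ℝ, b = Complex.exp (θ * Complex.I) * a := by
  by_cases ha : a = 0
  · refine ⟨0, ?_⟩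
    have : ‖b‖ = 0 := by rw [← h, ha, norm_zero]
    simp [ha, norm_eq_zero.mp this]
  · refine ⟨(b / a).arg, ?_⟩
    have habs : ‖b / a‖ = 1 := by
      rw [norm_div, ← h, div_self (norm_ne_zero_iff.mpr ha)]
    have := Complex.norm_mul_exp_arg_mul_I (b / a)
    rw [habs] at this
    simp only [Complex.ofReal_one, one_mul] at this
    rw [this, div_mul_cancel₀ _ ha]

/-- The fibres of `σ` are exactly the `S¹`-orbits in `ℂ²`. -/
theorem sigma4_fibres_eq_orbits (p q : ℂ × ℂ) :
    sigmaMap4 p = sigmaMap4 q ↔ ∃ θ : ℝ, q = circleAct θ p := by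
  constructor
  · intro h
    have h0 := congrFun h 0
    have h1 := congrFun h 1
    have h2 := congrFun h 2
    have h3 := congrFun h 3
    simp only [sigmaMap4, Matrix.cons_val_zero, Matrix.cons_val_one, Matrix.head_cons,
      Matrix.cons_val_two, Matrix.tail_cons, Matrix.cons_val_three] at h0 h1 h2 h3
    have hmul : p.1 * p.2 = q.1 * q.2 := Complex.ext h0 h1
    have h23 : ‖p.1‖ ^ 2 = ‖q.1‖ ^ 2 := by linarith
    have h23' : ‖p.2‖ ^ 2 = ‖q.2‖ ^ 2 := by linarith
    have ha1 : ‖p.1‖ = ‖q.1‖ :=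
      (sq_eq_sq₀ (norm_nonneg _) (norm_nonneg _)).mp h23
    have ha2 : ‖p.2‖ = ‖q.2‖ :=
      (sq_eq_sq₀ (norm_nonneg _) (norm_nonneg _)).mp h23'
    by_cases hp1 : p.1 = 0
    · have hq1 : q.1 = 0 := by
        have : ‖q.1‖ = 0 := by rw [← ha1, hp1, norm_zero]
        exact norm_eq_zero.mp this
      obtain ⟨θ, hθ⟩ := exists_exp_of_abs_eq ha2
      refine ⟨-θ, Prod.ext ?_ ?_⟩
      · simp [circleAct, hp1, hq1]
      · simp only [circleAct]
        rw [hθ]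
        push_cast
        ring_nf
    · obtain ⟨θ, hθ⟩ := exists_exp_of_abs_eq ha1
      have hm : Complex.exp (-(θ:ℂ) * Complex.I) * Complex.exp ((θ:ℂ) * Complex.I) = 1 := by
        rw [← Complex.exp_add]; ring_nf; exact Complex.exp_zero
      have hp2 : p.2 = Complex.exp ((θ:ℂ) * Complex.I) * q.2 := by
        apply mul_left_cancel₀ hp1
        rw [hmul, hθ]; ring
      refine ⟨θ, Prod.ext hθ ?_⟩
      simp only [circleAct]
      rw [hp2, ← mul_assoc]
      rw [hm, one_mul]
  · rintro ⟨θ, rfl⟩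
    have he : ‖Complex.exp (θ * Complex.I)‖ = 1 :=
      Complex.norm_exp_ofReal_mul_I θ
    have he' : ‖Complex.exp (-θ * Complex.I)‖ = 1 := by
      have := Complex.norm_exp_ofReal_mul_I (-θ)
      push_cast at this
      exact this
    have hm : Complex.exp ((θ:ℂ) * Complex.I) * Complex.exp (-(θ:ℂ) * Complex.I) = 1 := by
      rw [← Complex.exp_add]; ring_nf; exact Complex.exp_zero
    have hprod : (circleAct θ p).1 * (circleAct θ p).2 = p.1 * p.2 := by
      simp only [circleAct]
      calc Complex.exp (θ * Complex.I) * p.1 * (Complex.exp (-θ * Complex.I) * p.2)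
          = (Complex.exp ((θ:ℂ) * Complex.I) * Complex.exp (-(θ:ℂ) * Complex.I)) * (p.1 * p.2) := by
            ring
        _ = p.1 * p.2 := by rw [hm, one_mul]
    have ha1 : ‖(circleAct θ p).1‖ = ‖p.1‖ := by
      simp [circleAct, map_mul, he]
    have ha2 : ‖(circleAct θ p).2‖ = ‖p.2‖ := by
      simp only [circleAct, norm_mul]
      rw [he', one_mul]
    unfold sigmaMap4
    rw [hprod, ha1, ha2]
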